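/- Let t be an integer with t > 2, let R = ℤ[α] = ℤ[X]/(X² − tX + 1) with α the image of X. Let m₁, m₁', m₂, m₂' be positive integers with m₁·m₁' = t − 2 = m₂·m₂', gcd(m₁, m₁') = 1 and gcd(m₂, m₂') = 1. Set g = gcd(m₁, m₂) and m₃ = lcm(m₁, m₂)/gcd(m₁, m₂). Then, as ideals of R, (m₁, α−1)·(m₂, α−1) = (g)·(m₃, α−1); that is, the product of the ideals generated respectively by {m₁, α−1} and {m₂, α−1} equals the principal ideal generated by g times the ideal generated by {m₃, α−1}. -/

import Mathlib

open Polynomial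

/-- The order `ℤ[α] = ℤ[X]/(X² − tX + 1)`. -/
def QuadOrd (t : ℤ) : Type :=
  AdjoinRoot ((X : ℤ[X]) ^ 2 - C t * X + 1)

noncomputable instance (t : ℤ) : CommRing (QuadOrd t) :=
  inferInstanceAs (CommRing (AdjoinRoot _))

/-- The root `α`, i.e. the image of `X` in `ℤ[X]/(X² − tX + 1)`. -/
noncomputable def ordAlpha (t : ℤ) : QuadOrd t :=
  AdjoinRoot.root _

/-- for `t > 2` and positive integers `m₁, m₁', m₂, m₂'` with
`m₁·m₁' = t − 2 = m₂·m₂'`, `gcd(m₁, m₁') = 1` and `gcd(m₂, m₂') = 1`, setting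
`g = gcd(m₁, m₂)` and `m₃ = lcm(m₁, m₂)/gcd(m₁, m₂)`, one has
`(m₁, α−1)·(m₂, α−1) = (g)·(m₃, α−1)` as ideals of `ℤ[α] = ℤ[X]/(X² − tX + 1)`. -/
theorem ideal_class_multiplication_formula (t : ℤ) (ht : 2 < t)
    (m₁ m₁' m₂ m₂' : ℕ)
    (h₁ : 0 < m₁) (h₁' : 0 < m₁') (h₂ : 0 < m₂) (h₂' : 0 < m₂')
    (hm₁ : (m₁ : ℤ) * (m₁' : ℤ) = t - 2) (hm₂ : (m₂ : ℤ) * (m₂' : ℤ) = t - 2)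
    (hc₁ : Nat.gcd m₁ m₁' = 1) (hc₂ : Nat.gcd m₂ m₂' = 1) :
    Ideal.span ({(m₁ : QuadOrd t), ordAlpha t - 1} : Set (QuadOrd t)) *
        Ideal.span ({(m₂ : QuadOrd t), ordAlpha t - 1} : Set (QuadOrd t)) =
      Ideal.span ({((Nat.gcd m₁ m₂ : ℕ) : QuadOrd t)} : Set (QuadOrd t)) *
        Ideal.span ({((Nat.lcm m₁ m₂ / Nat.gcd m₁ m₂ : ℕ) : QuadOrd t),
          ordAlpha t - 1} : Set (QuadOrd t)) := by
  set R := QuadOrd t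
  set A : R := ordAlpha t with hA
  set e : R := A - 1 with he
  -- defining relation
  have hrel : A ^ 2 - (t : R) * A + 1 = 0 := by
    have h : (AdjoinRoot.mk ((X : ℤ[X]) ^ 2 - C t * X + 1)) ((X : ℤ[X]) ^ 2 - C t * X + 1) = 0 :=
      AdjoinRoot.mk_self
    simp only [map_add, map_sub, map_pow, map_mul, AdjoinRoot.mk_X, map_one,
      AdjoinRoot.mk_C, algebraMap_int_eq, eq_intCast] at h
    exact h
  have hAu : A * ((t : R) - A) = 1 := by linear_combination -hrel
  have he2 : e * e = ((t : R) - 2) * A := by rw [he]; linear_combination hrel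
  -- natural number bookkeeping
  set g := Nat.gcd m₁ m₂ with hg
  set L := Nat.lcm m₁ m₂ with hL
  set m₃ := L / g with hm₃
  set n := m₁ * m₁' with hn
  have hn2 : m₂ * m₂' = n := by
    have := hm₂.trans hm₁.symm
    exact_mod_cast this
  have hnZ : (n : ℤ) = t - 2 := by push_cast [hn]; push_cast at hm₁; linarith
  have hnR : (n : R) = (t : R) - 2 := by
    have := congrArg (fun z : ℤ => (z : R)) hnZ
    push_cast at this; exact this
  have hgm₁ : g ∣ m₁ := Nat.gcd_dvd_left _ _
  have hgm₂ : g ∣ m₂ := Nat.gcd_dvd_right _ _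
  have hm₁L : m₁ ∣ L := Nat.dvd_lcm_left _ _
  have hm₂L : m₂ ∣ L := Nat.dvd_lcm_right _ _
  have hgL : g ∣ L := hgm₁.trans hm₁L
  have hgm₃L : g * m₃ = L := Nat.mul_div_cancel' hgL
  have hglL : g * L = m₁ * m₂ := Nat.gcd_mul_lcm _ _
  obtain ⟨s₁, hs₁⟩ := id hgm₁
  obtain ⟨s₂, hs₂⟩ := id hgm₂
  have hm₁n : m₁ ∣ n := ⟨m₁', rfl⟩
  have hm₂n : m₂ ∣ n := ⟨m₂', hn2.symm⟩
  have hLn : L ∣ n := Nat.lcm_dvd hm₁n hm₂n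
  obtain ⟨k, hk⟩ := hLn
  obtain ⟨s, hs⟩ := hm₁L
  have hkm₁' : k ∣ m₁' := by
    refine ⟨s, ?_⟩
    have : m₁ * m₁' = m₁ * (k * s) := by rw [← hn, hk, hs]; ring
    exact (Nat.eq_of_mul_eq_mul_left h₁ this)
  have cop_gk : Nat.Coprime g k :=
    Nat.Coprime.coprime_dvd_left hgm₁ (Nat.Coprime.coprime_dvd_right hkm₁' hc₁)
  have hgcdn : Nat.gcd (m₁ * m₂) n = L := by
    rw [← hglL, hk, mul_comm L k, Nat.gcd_mul_right]
    rw [Nat.Coprime.gcd_eq_one cop_gk, one_mul]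
  -- Bezout
  set a := Nat.gcdA m₁ m₂ with ha
  set b := Nat.gcdB m₁ m₂ with hb
  have hbez1 : (g : ℤ) = m₁ * a + m₂ * b := Nat.gcd_eq_gcd_ab m₁ m₂
  set x := Nat.gcdA (m₁ * m₂) n with hx
  set y := Nat.gcdB (m₁ * m₂) n with hy
  have hbez2 : (L : ℤ) = (m₁ * m₂ : ℕ) * x + n * y := by
    rw [← hgcdn]; exact Nat.gcd_eq_gcd_ab _ _
  -- cast Bezout to R
  have hbez1R : (g : R) = (m₁ : R) * (a : R) + (m₂ : R) * (b : R) := by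
    have := congrArg (fun z : ℤ => (z : R)) hbez1
    push_cast +zetaDelta at this; exact this
  have hbez2R : (L : R) = (m₁ : R) * (m₂ : R) * (x : R) + (n : R) * (y : R) := by
    have := congrArg (fun z : ℤ => (z : R)) hbez2
    push_cast +zetaDelta at this; rw [hL, hx, hy, hn]; push_cast +zetaDelta; linear_combination this
  -- rewrite the spans
  rw [show ({(m₁ : R), e} : Set R) = insert (m₁ : R) {e} from rfl,
    show ({(m₂ : R), e} : Set R) = insert (m₂ : R) {e} from rfl,
    show ({(m₃ : R), e} : Set R) = insert (m₃ : R) {e} from rfl,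
    Ideal.span_insert, Ideal.span_insert, Ideal.span_insert,
    Ideal.sup_mul, Ideal.mul_sup, Ideal.mul_sup, Ideal.mul_sup,
    Ideal.span_singleton_mul_span_singleton, Ideal.span_singleton_mul_span_singleton,
    Ideal.span_singleton_mul_span_singleton, Ideal.span_singleton_mul_span_singleton,
    Ideal.span_singleton_mul_span_singleton, Ideal.span_singleton_mul_span_singleton]
  apply le_antisymm
  · refine sup_le (sup_le ?_ ?_) (sup_le ?_ ?_) <;>
      rw [Ideal.span_singleton_le_iff_mem]
    · -- m₁ * m₂ ∈
      refine Ideal.mem_sup_left (Ideal.mem_span_singleton'.mpr ⟨(g : R), ?_⟩)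
      have : (g : ℕ) * (g * m₃) = m₁ * m₂ := by rw [hgm₃L, hglL]
      have := congrArg (fun z : ℕ => (z : R)) this
      push_cast +zetaDelta at this; linear_combination this
    · -- m₁ * e ∈
      refine Ideal.mem_sup_right (Ideal.mem_span_singleton'.mpr ⟨(s₁ : R), ?_⟩)
      have : (s₁ : R) * (g : R) = (m₁ : R) := by
        have := congrArg (fun z : ℕ => (z : R)) hs₁
        push_cast +zetaDelta at this; linear_combination -this
      linear_combination e * this
    · -- e * m₂ ∈
      refine Ideal.mem_sup_right (Ideal.mem_span_singleton'.mpr ⟨(s₂ : R), ?_⟩)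
      have : (s₂ : R) * (g : R) = (m₂ : R) := by
        have := congrArg (fun z : ℕ => (z : R)) hs₂
        push_cast +zetaDelta at this; linear_combination -this
      linear_combination e * this
    · -- e * e ∈
      refine Ideal.mem_sup_left (Ideal.mem_span_singleton'.mpr ⟨(k : R) * A, ?_⟩)
      have hnn : (n : R) = (g : R) * (m₃ : R) * (k : R) := by
        have : n = g * m₃ * k := by rw [hgm₃L, hk]
        have := congrArg (fun z : ℕ => (z : R)) this
        push_cast +zetaDelta at this; rw [hn, hg, hm₃, hL]; push_cast +zetaDelta; linear_combination this
      rw [he2, ← hnR, hnn]; ring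
  · refine sup_le ?_ ?_ <;> rw [Ideal.span_singleton_le_iff_mem]
    · -- g * m₃ ∈ big sup
      have key : (g : R) * (m₃ : R) =
          (x : R) * ((m₁ : R) * (m₂ : R)) + ((y : R) * ((t : R) - A)) * (e * e) := by
        have hgm₃R : (g : R) * (m₃ : R) = (L : R) := by
          have := congrArg (fun z : ℕ => (z : R)) hgm₃L
          push_cast +zetaDelta at this; exact this
        rw [hgm₃R, he2, ← hnR]
        linear_combination -(y : R) * (n : R) * hAu + hbez2R
      rw [key]
      exact add_mem
        (Ideal.mem_sup_left (Ideal.mem_sup_left (Ideal.mem_span_singleton'.mpr ⟨_, rfl⟩)))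
        (Ideal.mem_sup_right (Ideal.mem_sup_right (Ideal.mem_span_singleton'.mpr ⟨_, rfl⟩)))
    · -- g * e ∈ big sup
      have key : (g : R) * e = (a : R) * ((m₁ : R) * e) + (b : R) * (e * (m₂ : R)) := by
        linear_combination e * hbez1R
      rw [key]
      exact add_mem
        (Ideal.mem_sup_left (Ideal.mem_sup_right (Ideal.mem_span_singleton'.mpr ⟨_, rfl⟩)))
        (Ideal.mem_sup_right (Ideal.mem_sup_left (Ideal.mem_span_singleton'.mpr ⟨_, rfl⟩)))
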